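/- Let f : 𝔻 → 𝔻ⁿ be a holomorphic map and let m ≥ 2 be an integer. Then the following are equivalent: (a) f is a weak m-extremal of 𝔻ⁿ; (b) f is an m-extremal of 𝔻ⁿ; (c) f is an m-geodesic of 𝔻ⁿ; (d) some coordinate function f_j is a non-constant Blaschke product of degree at most m−1. -/

import Mathlib

open Complex Metric Set Filter Topology

noncomputable section

/-- The open unit disc `𝔻` in `ℂ`. -/
def unitDisc : Set ℂ := Metric.ball (0 : ℂ) 1

/-- The Möbius function `m_α(λ) = (λ - α)/(1 - conj α · λ)`. -/
def mobius (a z : ℂ) : ℂ := (z - a) / (1 - (starRingEnd ℂ) a * z)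

/-- `B` agrees on the unit disc with a finite Blaschke product
`ζ · ∏_{j=1}^k m_{α_j}` of degree `k` (here `ζ ∈ 𝕋`, `α_j ∈ 𝔻`). -/
def IsBlaschkeOn (B : ℂ → ℂ) (k : ℕ) : Prop :=
  ∃ (ζ : ℂ) (α : Fin k → ℂ), ‖ζ‖ = 1 ∧ (∀ j, ‖α j‖ < 1) ∧
    ∀ z ∈ unitDisc, B z = ζ * ∏ j, mobius (α j) z

lemma norm_identity (a z : ℂ) :
    ‖1 - (starRingEnd ℂ) a * z‖^2 - ‖z - a‖^2 = (1-‖a‖^2)*(1-‖z‖^2) := by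
  have h : ∀ w : ℂ, ‖w‖^2 = Complex.normSq w := by
    intro w; rw [Complex.sq_norm]
  rw [h, h]
  have h2 : (1:ℝ) - ‖a‖^2 = 1 - Complex.normSq a := by rw [h]
  rw [h2, h]
  simp only [Complex.normSq_apply, Complex.sub_re, Complex.sub_im, Complex.mul_re,
    Complex.mul_im, Complex.one_re, Complex.one_im, Complex.conj_re, Complex.conj_im]
  ring

lemma mobius_denom_ne {a z : ℂ} (ha : ‖a‖ < 1) (hz : ‖z‖ ≤ 1) :
    1 - (starRingEnd ℂ) a * z ≠ 0 := by
  intro h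
  have h2 : (1:ℂ) = (starRingEnd ℂ) a * z := by linear_combination h
  have : ‖(starRingEnd ℂ) a * z‖ < 1 := by
    rw [norm_mul, RCLike.norm_conj]
    nlinarith [norm_nonneg a, norm_nonneg z]
  rw [← h2] at this; simp at this

lemma norm_mobius_lt_one {a z : ℂ} (ha : ‖a‖ < 1) (hz : ‖z‖ < 1) : ‖mobius a z‖ < 1 := by
  have hd := mobius_denom_ne ha hz.le
  have hdp : 0 < ‖1 - (starRingEnd ℂ) a * z‖ := norm_pos_iff.2 hd
  rw [mobius, norm_div, div_lt_one hdp]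
  have hpos : 0 < (1-‖a‖^2)*(1-‖z‖^2) :=
    mul_pos (by nlinarith [norm_nonneg a]) (by nlinarith [norm_nonneg z])
  have hsq : ‖z - a‖^2 < ‖1 - (starRingEnd ℂ) a * z‖^2 := by
    linarith [norm_identity a z]
  exact lt_of_pow_lt_pow_left₀ 2 (norm_nonneg _) hsq

lemma norm_mobius_le_one {a z : ℂ} (ha : ‖a‖ < 1) (hz : ‖z‖ ≤ 1) : ‖mobius a z‖ ≤ 1 := by
  have hd := mobius_denom_ne ha hz
  have hdp : 0 < ‖1 - (starRingEnd ℂ) a * z‖ := norm_pos_iff.2 hd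
  rw [mobius, norm_div, div_le_one hdp]
  have hpos : 0 ≤ (1-‖a‖^2)*(1-‖z‖^2) :=
    mul_nonneg (by nlinarith [norm_nonneg a]) (by nlinarith [norm_nonneg z])
  have hsq : ‖z - a‖^2 ≤ ‖1 - (starRingEnd ℂ) a * z‖^2 := by
    linarith [norm_identity a z]
  exact le_of_pow_le_pow_left₀ (by norm_num) (norm_nonneg _) hsq

lemma norm_mobius_eq_one {a z : ℂ} (ha : ‖a‖ < 1) (hz : ‖z‖ = 1) : ‖mobius a z‖ = 1 := by
  have hd := mobius_denom_ne ha hz.le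
  have hdp : 0 < ‖1 - (starRingEnd ℂ) a * z‖ := norm_pos_iff.2 hd
  rw [mobius, norm_div, div_eq_one_iff_eq hdp.ne']
  have hz2 : (1:ℝ) - ‖z‖^2 = 0 := by rw [hz]; ring
  have hsq : ‖z - a‖^2 = ‖1 - (starRingEnd ℂ) a * z‖^2 := by
    have := norm_identity a z
    rw [hz2, mul_zero] at this; linarith
  have := congrArg Real.sqrt hsq
  rwa [Real.sqrt_sq (norm_nonneg _), Real.sqrt_sq (norm_nonneg _)] at this

lemma norm_one_sub_le {a r : ℂ} (ha : ‖a‖ < 1) (hr : 1 ≤ ‖r‖) :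
    ‖1 - (starRingEnd ℂ) a * r‖ ≤ ‖r - a‖ := by
  have hpos : (1-‖a‖^2)*(1-‖r‖^2) ≤ 0 :=
    mul_nonpos_of_nonneg_of_nonpos (by nlinarith [norm_nonneg a]) (by nlinarith)
  have hsq : ‖1 - (starRingEnd ℂ) a * r‖^2 ≤ ‖r - a‖^2 := by
    linarith [norm_identity a r]
  exact le_of_pow_le_pow_left₀ (by norm_num) (norm_nonneg _) hsq

lemma mobius_self (a : ℂ) : mobius a a = 0 := by simp [mobius]

lemma mobius_inv {a z : ℂ} (ha : ‖a‖ < 1) (hz : ‖z‖ < 1) :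
    mobius (-a) (mobius a z) = z := by
  have hd := mobius_denom_ne ha hz.le
  have h1 : 1 - (starRingEnd ℂ) a * a ≠ 0 := mobius_denom_ne ha ha.le
  rw [mobius, mobius]
  have hd2 : 1 - (starRingEnd ℂ) (-a) * ((z - a) / (1 - (starRingEnd ℂ) a * z)) =
      (1 - (starRingEnd ℂ) a * a) / (1 - (starRingEnd ℂ) a * z) := by
    rw [map_neg]; field_simp; ring
  rw [hd2]
  rw [sub_neg_eq_add, div_add' _ _ _ hd, div_div_div_cancel_right₀ hd, div_eq_iff h1]
  ring

lemma mobius_eq_zero {a z : ℂ} (ha : ‖a‖ < 1) (hz : ‖z‖ ≤ 1) (h : mobius a z = 0) : z = a := by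
  rw [mobius, div_eq_zero_iff] at h
  rcases h with h | h
  · exact sub_eq_zero.1 h
  · exact absurd h (mobius_denom_ne ha hz)

lemma mobius_ne_zero {a z : ℂ} (ha : ‖a‖ < 1) (hz : ‖z‖ ≤ 1) (h : z ≠ a) : mobius a z ≠ 0 :=
  fun hc => h (mobius_eq_zero ha hz hc)
lemma diffOn_mobius_comp {U : Set ℂ} {G : ℂ → ℂ} (hG : DifferentiableOn ℂ G U) {a : ℂ}
    (h : ∀ z ∈ U, 1 - (starRingEnd ℂ) a * G z ≠ 0) :
    DifferentiableOn ℂ (fun z => mobius a (G z)) U := by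
  unfold mobius
  exact (hG.sub_const a).div
    ((differentiableOn_const 1).sub ((differentiableOn_const _).mul hG)) h

/-- Removable-singularity division: if `H` is holomorphic on open `U` and vanishes at
`c ∈ U` then `H z = (z - c) * K z` for some `K` holomorphic on `U`. -/
lemma qcore {U : Set ℂ} (hU : IsOpen U) {c : ℂ} (hc : c ∈ U) {H : ℂ → ℂ}
    (hH : DifferentiableOn ℂ H U) (h0 : H c = 0) :
    ∃ K : ℂ → ℂ, DifferentiableOn ℂ K U ∧ ∀ z ∈ U, H z = (z - c) * K z := by
  set K : ℂ → ℂ := Function.update (fun z => H z / (z - c)) c (deriv H c) with hK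
  have hne : ∀ z, z ≠ c → K z = H z / (z - c) := fun z hz => Function.update_of_ne hz _ _
  have hdiff_ne : ∀ z ∈ U, z ≠ c → DifferentiableAt ℂ K z := by
    intro z hzU hzc
    have h1 : DifferentiableAt ℂ (fun w => H w / (w - c)) z :=
      (hH.differentiableAt (hU.mem_nhds hzU)).div
        (differentiableAt_id.sub_const c) (sub_ne_zero.2 hzc)
    refine h1.congr_of_eventuallyEq ?_
    filter_upwards [eventually_ne_nhds hzc] with w hw
    exact hne w hw
  refine ⟨K, ?_, ?_⟩
  · intro z hz
    rcases eq_or_ne z c with rfl | hzc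
    · have hd : HasDerivAt H (deriv H z) z := (hH.differentiableAt (hU.mem_nhds hz)).hasDerivAt
      have htend : Tendsto (fun w => H w / (w - z)) (𝓝[≠] z) (𝓝 (deriv H z)) := by
        have := hasDerivAt_iff_tendsto_slope.1 hd
        refine this.congr' ?_
        filter_upwards [self_mem_nhdsWithin] with w hw
        rw [slope_def_field, h0]
        field_simp [sub_ne_zero.2 (hw : w ≠ z)]
        ring
      have hcont : ContinuousAt K z := by
        rw [hK]
        exact continuousAt_update_same.2 htend
      have hana : AnalyticAt ℂ K z := by
        refine Complex.analyticAt_of_differentiable_on_punctured_nhds_of_continuousAt ?_ hcont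
        filter_upwards [self_mem_nhdsWithin, nhdsWithin_le_nhds (hU.mem_nhds hz)] with w hw hwU
        exact hdiff_ne w hwU hw
      exact hana.differentiableAt.differentiableWithinAt
    · exact (hdiff_ne z hz hzc).differentiableWithinAt
  · intro z hz
    rcases eq_or_ne z c with rfl | hzc
    · simp [h0]
    · rw [hne z hzc, mul_div_cancel₀ _ (sub_ne_zero.2 hzc)]

lemma norm_circle_eq {α z : ℂ} (hz : ‖z‖ = 1) : ‖z - α‖ = ‖1 - (starRingEnd ℂ) α * z‖ := by
  have h := norm_identity α z
  rw [hz] at h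
  have hsq : ‖z - α‖^2 = ‖1 - (starRingEnd ℂ) α * z‖^2 := by nlinarith
  have := congrArg Real.sqrt hsq
  rwa [Real.sqrt_sq (norm_nonneg _), Real.sqrt_sq (norm_nonneg _)] at this

lemma factF {k : ℕ} {a ζ : ℂ} (ha : ‖a‖ < 1) (hζ : ‖ζ‖ = 1) {α : Fin k → ℂ}
    (hα : ∀ j, ‖α j‖ < 1) :
    ∃ (ζ' : ℂ) (β : Fin k → ℂ), ‖ζ'‖ = 1 ∧ (∀ j, ‖β j‖ < 1) ∧
      ∀ z ∈ unitDisc, mobius a (ζ * ∏ j, mobius (α j) z) = ζ' * ∏ j, mobius (β j) z := by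
  classical
  set P : ℂ → ℂ := fun z => ∏ j, (z - α j) with hPdef
  set Q : ℂ → ℂ := fun z => ∏ j, (1 - (starRingEnd ℂ) (α j) * z) with hQdef
  set Np : Polynomial ℂ := Polynomial.C ζ * ∏ j, (Polynomial.X - Polynomial.C (α j)) -
      Polynomial.C a * ∏ j, (1 - Polynomial.C ((starRingEnd ℂ) (α j)) * Polynomial.X) with hNpdef
  have hζ0 : ζ ≠ 0 := by intro h; rw [h] at hζ; simp at hζ
  have heval : ∀ z, Np.eval z = ζ * P z - a * Q z := by
    intro z
    simp [hNpdef, hPdef, hQdef, Polynomial.eval_prod]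
  have hQne : ∀ z : ℂ, ‖z‖ ≤ 1 → Q z ≠ 0 := by
    intro z hz
    rw [hQdef]
    exact Finset.prod_ne_zero_iff.2 fun j _ => mobius_denom_ne (hα j) hz
  have hcirc : ∀ z : ℂ, ‖z‖ = 1 → ‖P z‖ = ‖Q z‖ := by
    intro z hz
    rw [hPdef, hQdef]
    simp only [norm_prod]
    exact Finset.prod_congr rfl fun j _ => norm_circle_eq hz
  have hNp0 : Np ≠ 0 := by
    intro h
    have h1 : Np.eval 1 = 0 := by rw [h]; simp
    rw [heval 1, sub_eq_zero] at h1
    have hn1 : ‖(1:ℂ)‖ = 1 := by simp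
    have hQ1 : Q 1 ≠ 0 := hQne 1 (by simp)
    have := congrArg norm h1
    rw [norm_mul, norm_mul, hζ, one_mul, hcirc 1 hn1] at this
    have hQpos : 0 < ‖Q 1‖ := norm_pos_iff.2 hQ1
    nlinarith
  set c := Np.leadingCoeff with hcdef
  have hc0 : c ≠ 0 := Polynomial.leadingCoeff_ne_zero.2 hNp0
  have hsplit : Np.Splits := IsAlgClosed.splits Np
  have heq := hsplit.eq_prod_roots
  set L : List ℂ := Np.roots.toList with hLdef
  have hevalβ : ∀ z, Np.eval z = c * ∏ i : Fin L.length, (z - L[(i:ℕ)]) := by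
    intro z
    conv_lhs => rw [heq]
    rw [Polynomial.eval_mul, Polynomial.eval_C, Polynomial.eval_multiset_prod]
    congr 1
    rw [Fin.prod_univ_fun_getElem L (fun r => z - r)]
    rw [Multiset.map_map]
    have : Np.roots = (L : Multiset ℂ) := (Multiset.coe_toList Np.roots).symm
    rw [this, Multiset.map_coe, Multiset.prod_coe]
    congr 1
    ext r
    simp
  have hβroot : ∀ i : Fin L.length, L[(i:ℕ)] ∈ Np.roots := by
    intro i
    exact (Multiset.mem_toList).1 (List.getElem_mem _)
  have hβlt : ∀ i : Fin L.length, ‖L[(i:ℕ)]‖ < 1 := by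
    intro i
    by_contra hr
    push_neg at hr
    set r := L[(i:ℕ)] with hrdef
    have hroot : Np.eval r = 0 := (Polynomial.mem_roots hNp0).1 (hβroot i)
    rw [heval r, sub_eq_zero] at hroot
    have hQr : Q r ≠ 0 := by
      intro hq
      rw [hq, mul_zero] at hroot
      have hPr : P r = 0 := by
        rcases mul_eq_zero.1 hroot with h | h
        · exact absurd h hζ0
        · exact h
      rw [hPdef] at hPr
      obtain ⟨j, _, hj⟩ := Finset.prod_eq_zero_iff.1 hPr
      have : r = α j := by linear_combination hj
      rw [this] at hr
      exact absurd (hα j) (not_lt.2 hr)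
    have hPQ : ‖Q r‖ ≤ ‖P r‖ := by
      rw [hPdef, hQdef]
      simp only [norm_prod]
      exact Finset.prod_le_prod (fun j _ => norm_nonneg _)
        (fun j _ => by
          exact norm_one_sub_le (hα j) hr)
    have := congrArg norm hroot
    rw [norm_mul, norm_mul, hζ, one_mul] at this
    have hQpos : 0 < ‖Q r‖ := norm_pos_iff.2 hQr
    nlinarith
  have hdk : L.length ≤ k := by
    have h0 : L.length = Multiset.card Np.roots := Multiset.length_toList _
    have h1 : Multiset.card Np.roots ≤ Np.natDegree := Polynomial.card_roots' Np
    have h2 : (∏ j, (Polynomial.X - Polynomial.C (α j)) : Polynomial ℂ).natDegree = k := by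
      rw [Polynomial.natDegree_prod_of_monic _ _ (fun j _ => Polynomial.monic_X_sub_C _)]
      simp
    have h3 : (Polynomial.C ζ * ∏ j, (Polynomial.X - Polynomial.C (α j)) :
        Polynomial ℂ).natDegree ≤ k :=
      le_trans (Polynomial.natDegree_C_mul_le _ _) (le_of_eq h2)
    have h4 : (∏ j, (1 - Polynomial.C ((starRingEnd ℂ) (α j)) * Polynomial.X) :
        Polynomial ℂ).natDegree ≤ k := by
      refine le_trans (Polynomial.natDegree_prod_le _ _) ?_
      have : ∀ j : Fin k, (1 - Polynomial.C ((starRingEnd ℂ) (α j)) * Polynomial.X :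
          Polynomial ℂ).natDegree ≤ 1 := by
        intro j
        refine le_trans (Polynomial.natDegree_sub_le _ _) ?_
        simp only [Polynomial.natDegree_one, max_le_iff]
        exact ⟨Nat.zero_le _, le_trans (Polynomial.natDegree_C_mul_le _ _)
          (le_of_eq Polynomial.natDegree_X)⟩
      calc ∑ j, (1 - Polynomial.C ((starRingEnd ℂ) (α j)) * Polynomial.X :
          Polynomial ℂ).natDegree ≤ ∑ _j : Fin k, 1 := Finset.sum_le_sum (fun j _ => this j)
        _ = k := by simp
    have h5 : (Polynomial.C a * ∏ j, (1 - Polynomial.C ((starRingEnd ℂ) (α j)) * Polynomial.X) :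
        Polynomial ℂ).natDegree ≤ k :=
      le_trans (Polynomial.natDegree_C_mul_le _ _) h4
    have h6 : Np.natDegree ≤ k := by
      rw [hNpdef]
      exact le_trans (Polynomial.natDegree_sub_le _ _) (max_le h3 h5)
    omega
  have key1 : ∀ z : ℂ, z ≠ 0 → ∀ γ : ℂ,
      (starRingEnd ℂ) (((starRingEnd ℂ) z)⁻¹ - γ) * z = 1 - (starRingEnd ℂ) γ * z := by
    intro z hz γ
    rw [map_sub, map_inv₀, Complex.conj_conj]
    field_simp
  have key2 : ∀ z : ℂ, z ≠ 0 → ∀ γ : ℂ,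
      (starRingEnd ℂ) (1 - (starRingEnd ℂ) γ * ((starRingEnd ℂ) z)⁻¹) * z = z - γ := by
    intro z hz γ
    rw [map_sub, map_one, map_mul, Complex.conj_conj, map_inv₀, Complex.conj_conj]
    field_simp
  have hstar : ∀ z : ℂ,
      (starRingEnd ℂ) ζ * Q z - (starRingEnd ℂ) a * P z =
        (starRingEnd ℂ) c * z ^ (k - L.length) *
          ∏ i : Fin L.length, (1 - (starRingEnd ℂ) (L[(i:ℕ)]) * z) := by
    have hcont1 : Continuous fun z : ℂ =>
        (starRingEnd ℂ) ζ * Q z - (starRingEnd ℂ) a * P z := by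
      rw [hPdef, hQdef]; fun_prop
    have hcont2 : Continuous fun z : ℂ =>
        (starRingEnd ℂ) c * z ^ (k - L.length) *
          ∏ i : Fin L.length, (1 - (starRingEnd ℂ) (L[(i:ℕ)]) * z) := by
      fun_prop
    have hEq : ∀ z : ℂ, z ≠ 0 →
        (starRingEnd ℂ) ζ * Q z - (starRingEnd ℂ) a * P z =
          (starRingEnd ℂ) c * z ^ (k - L.length) *
            ∏ i : Fin L.length, (1 - (starRingEnd ℂ) (L[(i:ℕ)]) * z) := by
      intro z hz
      set w : ℂ := ((starRingEnd ℂ) z)⁻¹ with hwdef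
      have e1 : (starRingEnd ℂ) (P w) * z ^ k = Q z := by
        rw [hPdef, hQdef]
        simp only
        rw [map_prod]
        have hzk : z ^ k = ∏ _j : Fin k, z := by simp
        rw [hzk, ← Finset.prod_mul_distrib]
        exact Finset.prod_congr rfl fun j _ => key1 z hz (α j)
      have e2 : (starRingEnd ℂ) (Q w) * z ^ k = P z := by
        rw [hPdef, hQdef]
        simp only
        rw [map_prod]
        have hzk : z ^ k = ∏ _j : Fin k, z := by simp
        rw [hzk, ← Finset.prod_mul_distrib]
        exact Finset.prod_congr rfl fun j _ => key2 z hz (α j)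
      have e4 : (starRingEnd ℂ) (Np.eval w) * z ^ k =
          (starRingEnd ℂ) c * z ^ (k - L.length) *
            ∏ i : Fin L.length, (1 - (starRingEnd ℂ) (L[(i:ℕ)]) * z) := by
        rw [hevalβ w, map_mul, map_prod]
        have hsplit_pow : z ^ k = z ^ L.length * z ^ (k - L.length) := by
          rw [← pow_add]
          congr 1
          omega
        rw [hsplit_pow]
        have e5 : (∏ i : Fin L.length, (starRingEnd ℂ) (w - L[(i:ℕ)])) * z ^ L.length =
            ∏ i : Fin L.length, (1 - (starRingEnd ℂ) (L[(i:ℕ)]) * z) := by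
          have hzk : z ^ L.length = ∏ _j : Fin L.length, z := by simp
          rw [hzk, ← Finset.prod_mul_distrib]
          exact Finset.prod_congr rfl fun i _ => key1 z hz _
        calc (starRingEnd ℂ) c * (∏ i : Fin L.length, (starRingEnd ℂ) (w - L[(i:ℕ)])) *
            (z ^ L.length * z ^ (k - L.length))
            = (starRingEnd ℂ) c * z ^ (k - L.length) *
              ((∏ i : Fin L.length, (starRingEnd ℂ) (w - L[(i:ℕ)])) * z ^ L.length) := by ring
          _ = _ := by rw [e5]
      have e3 : (starRingEnd ℂ) (Np.eval w) * z ^ k =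
          (starRingEnd ℂ) ζ * Q z - (starRingEnd ℂ) a * P z := by
        rw [heval w, map_sub, map_mul, map_mul, sub_mul, mul_assoc, mul_assoc, e1, e2]
      rw [← e3, e4]
    have := Continuous.ext_on (dense_compl_singleton (0:ℂ)) hcont1 hcont2
      (fun z hz => hEq z hz)
    exact fun z => congrFun this z
  have hkd : L.length = k := by
    by_contra hne
    have hlt : L.length < k := lt_of_le_of_ne hdk hne
    have h0 := hstar 0
    have hQ0 : Q 0 = 1 := by rw [hQdef]; simp
    have hP0 : P 0 = ∏ j, (-(α j)) := by rw [hPdef]; simp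
    rw [hQ0, hP0, zero_pow (by omega : k - L.length ≠ 0)] at h0
    simp only [mul_zero, zero_mul, mul_one] at h0
    have := congrArg norm h0
    simp only [norm_zero] at this
    have h1 : ‖(starRingEnd ℂ) ζ - (starRingEnd ℂ) a * ∏ j, (-(α j))‖ = 0 := this
    have h2 : (starRingEnd ℂ) ζ = (starRingEnd ℂ) a * ∏ j, (-(α j)) := by
      have := norm_eq_zero.1 h1
      linear_combination this
    have h3 := congrArg norm h2
    rw [RCLike.norm_conj, hζ, norm_mul, RCLike.norm_conj, norm_prod] at h3
    have h4 : ∏ j, ‖-(α j)‖ ≤ 1 :=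
      Finset.prod_le_one (fun j _ => norm_nonneg _)
        (fun j _ => by rw [norm_neg]; exact (hα j).le)
    nlinarith [norm_nonneg a, Finset.prod_nonneg (fun j (_ : j ∈ Finset.univ) => norm_nonneg (-(α j)))]
  refine ⟨c / (ζ * (starRingEnd ℂ) c), fun i => L[((i.cast hkd.symm : Fin L.length) : ℕ)], ?_, ?_, ?_⟩
  · rw [norm_div, norm_mul, RCLike.norm_conj, hζ, one_mul,
      div_self (norm_ne_zero_iff.2 hc0)]
  · intro j
    exact hβlt _
  · intro z hzD
    have hz1 : ‖z‖ < 1 := mem_ball_zero_iff.1 hzD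
    have hQz : Q z ≠ 0 := hQne z hz1.le
    have hBle : ‖ζ * ∏ j, mobius (α j) z‖ ≤ 1 := by
      rw [norm_mul, hζ, one_mul, norm_prod]
      exact Finset.prod_le_one (fun j _ => norm_nonneg _)
        (fun j _ => norm_mobius_le_one (hα j) hz1.le)
    have hden : 1 - (starRingEnd ℂ) a * (ζ * ∏ j, mobius (α j) z) ≠ 0 :=
      mobius_denom_ne ha hBle
    have hprodPQ : ∏ j, mobius (α j) z = P z / Q z := by
      rw [hPdef, hQdef]
      simp only [mobius]
      exact Finset.prod_div_distrib _ _
    have hQB : (∏ i : Fin L.length, (1 - (starRingEnd ℂ) (L[(i:ℕ)]) * z)) ≠ 0 :=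
      Finset.prod_ne_zero_iff.2 fun i _ => mobius_denom_ne (hβlt i) hz1.le
    have hstar' : (starRingEnd ℂ) ζ * Q z - (starRingEnd ℂ) a * P z =
        (starRingEnd ℂ) c * ∏ i : Fin L.length, (1 - (starRingEnd ℂ) (L[(i:ℕ)]) * z) := by
      have := hstar z
      have h0 : k - L.length = 0 := by omega
      rw [h0, pow_zero, mul_one] at this
      exact this
    have hζζ : ζ * (starRingEnd ℂ) ζ = 1 := by
      rw [Complex.mul_conj]
      rw [Complex.normSq_eq_norm_sq, hζ]
      norm_num
    have hD : Q z - (starRingEnd ℂ) a * ζ * P z =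
        ζ * ((starRingEnd ℂ) c * ∏ i : Fin L.length, (1 - (starRingEnd ℂ) (L[(i:ℕ)]) * z)) := by
      linear_combination ζ * hstar' - Q z * hζζ
    have hDne : Q z - (starRingEnd ℂ) a * ζ * P z ≠ 0 := by
      rw [hD]
      exact mul_ne_zero hζ0 (mul_ne_zero (star_ne_zero.2 hc0) hQB)
    have hnum : ζ * P z - a * Q z = c * ∏ i : Fin L.length, (z - L[(i:ℕ)]) :=
      (heval z).symm.trans (hevalβ z)
    have hden2 : 1 - (starRingEnd ℂ) a * (ζ * (P z / Q z)) ≠ 0 := by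
      rw [← hprodPQ]; exact hden
    have hstep1 : mobius a (ζ * ∏ j, mobius (α j) z) =
        (ζ * P z - a * Q z) / (Q z - (starRingEnd ℂ) a * ζ * P z) := by
      calc mobius a (ζ * ∏ j, mobius (α j) z) = mobius a (ζ * (P z / Q z)) := by
            rw [hprodPQ]
        _ = (ζ * (P z / Q z) - a) / (1 - (starRingEnd ℂ) a * (ζ * (P z / Q z))) := rfl
        _ = (ζ * P z - a * Q z) / (Q z - (starRingEnd ℂ) a * ζ * P z) := by
            rw [div_eq_div_iff hden2 hDne]
            field_simp
    have hprodβ : ∏ i : Fin L.length, mobius (L[(i:ℕ)]) z =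
        (∏ i : Fin L.length, (z - L[(i:ℕ)])) /
          (∏ i : Fin L.length, (1 - (starRingEnd ℂ) (L[(i:ℕ)]) * z)) := by
      simp only [mobius]
      exact Finset.prod_div_distrib _ _
    have hprodcast : ∏ j : Fin k, mobius (L[(((j.cast hkd.symm : Fin L.length)) : ℕ)]) z =
        ∏ i : Fin L.length, mobius (L[(i:ℕ)]) z :=
      Fin.prod_congr' (fun i : Fin L.length => mobius (L[(i:ℕ)]) z) hkd.symm
    rw [hstep1, hnum, hD, hprodcast, hprodβ]
    rw [div_mul_div_comm]
    ring

lemma one_sub_ne {x : ℂ} (h : ‖x‖ < 1) : (1:ℂ) - x ≠ 0 := by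
  intro h0
  have hx : x = 1 := by linear_combination -h0
  rw [hx] at h
  simp at h

lemma lemA : ∀ (k : ℕ) (ζ : ℂ) (α : Fin k → ℂ), ‖ζ‖ = 1 → (∀ j, ‖α j‖ < 1) →
    ∀ (U : Set ℂ) (G : ℂ → ℂ), IsOpen U → Metric.closedBall (0:ℂ) 1 ⊆ U →
    DifferentiableOn ℂ G U → (∀ z ∈ U, ‖G z‖ < 1) →
    ∀ (lam : Fin (k+1) → ℂ), Function.Injective lam → (∀ i, lam i ∈ unitDisc) →
    (∀ i, G (lam i) = ζ * ∏ j, mobius (α j) (lam i)) → False := by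
  intro k
  induction k with
  | zero =>
    intro ζ α hζ hα U G hUo hUc hGd hGb lam hinj hmem hGB
    have h := hGB 0
    simp only [Finset.univ_eq_empty, Finset.prod_empty, mul_one] at h
    have hU : lam 0 ∈ U := hUc (ball_subset_closedBall (hmem 0))
    have := hGb (lam 0) hU
    rw [h, hζ] at this
    exact lt_irrefl _ this
  | succ k IH =>
    intro ζ α hζ hα U G hUo hUc hGd hGb lam hinj hmem hGB
    set lb := lam 0 with hlbdef
    have hlbD : ‖lb‖ < 1 := mem_ball_zero_iff.1 (hmem 0)
    have hlbU : lb ∈ U := hUc (ball_subset_closedBall (hmem 0))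
    set w := G lb with hwdef
    have hwD : ‖w‖ < 1 := hGb _ hlbU
    set G' : ℂ → ℂ := fun z => mobius w (G z) with hG'def
    have hG'd : DifferentiableOn ℂ G' U :=
      diffOn_mobius_comp hGd (fun z hz => mobius_denom_ne hwD (hGb z hz).le)
    have hG'b : ∀ z ∈ U, ‖G' z‖ < 1 := fun z hz => norm_mobius_lt_one hwD (hGb z hz)
    have hG'0 : G' lb = 0 := by show mobius w (G lb) = 0; rw [← hwdef]; exact mobius_self w
    set R := 2 / (1 + ‖lb‖) with hRdef
    have ht0 : (0:ℝ) ≤ ‖lb‖ := norm_nonneg _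
    have hR1 : 1 < R := by
      rw [hRdef, lt_div_iff₀ (by linarith)]
      linarith
    have hRl : ∀ z : ℂ, ‖z‖ < R → ‖(starRingEnd ℂ) lb * z‖ < 1 := by
      intro z hz
      rw [norm_mul, RCLike.norm_conj]
      rcases eq_or_lt_of_le ht0 with h0 | h0
      · rw [← h0]; simpa using one_pos
      · have h1 : ‖lb‖ * ‖z‖ < ‖lb‖ * R :=
          mul_lt_mul_of_pos_left hz h0
        have h2 : ‖lb‖ * R < 1 := by
          rw [hRdef]
          calc ‖lb‖ * (2 / (1 + ‖lb‖)) = (2*‖lb‖) / (1 + ‖lb‖) := by ring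
            _ < 1 := (div_lt_one (by linarith)).2 (by linarith)
        linarith
    set U₀ := U ∩ ball (0:ℂ) R with hU₀def
    have hU₀o : IsOpen U₀ := hUo.inter isOpen_ball
    have hU₀c : Metric.closedBall (0:ℂ) 1 ⊆ U₀ :=
      subset_inter hUc (closedBall_subset_ball hR1)
    set H : ℂ → ℂ := fun z => G' z * (1 - (starRingEnd ℂ) lb * z) with hHdef
    have hHd : DifferentiableOn ℂ H U₀ :=
      (hG'd.mono inter_subset_left).mul
        ((differentiableOn_const _).sub ((differentiableOn_const _).mul differentiableOn_id))
    have hH0 : H lb = 0 := by show G' lb * _ = 0; rw [hG'0, zero_mul]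
    have hlbU₀ : lb ∈ U₀ := ⟨hlbU, mem_ball_zero_iff.2 (lt_trans hlbD hR1)⟩
    obtain ⟨K, hKd, hKfac⟩ := qcore hU₀o hlbU₀ hHd hH0
    have hrel : ∀ z ∈ U₀, mobius lb z * K z = G' z := by
      intro z hz
      have hzR : ‖z‖ < R := mem_ball_zero_iff.1 hz.2
      have hdz : 1 - (starRingEnd ℂ) lb * z ≠ 0 := one_sub_ne (hRl z hzR)
      have hfz := hKfac z hz
      simp only [hHdef] at hfz
      rw [mobius, div_mul_eq_mul_div, div_eq_iff hdz]
      linear_combination -hfz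
    have hsphere : ∀ z ∈ sphere (0:ℂ) 1, ‖K z‖ < 1 := by
      intro z hz
      have hz1 : ‖z‖ = 1 := by simpa using hz
      have hzU₀ : z ∈ U₀ := hU₀c (sphere_subset_closedBall hz)
      have h1 := hrel z hzU₀
      have h2 := congrArg norm h1
      rw [norm_mul, norm_mobius_eq_one hlbD hz1, one_mul] at h2
      rw [h2]
      exact hG'b z hzU₀.1
    obtain ⟨x₀, hx₀s, hx₀max'⟩ := (isCompact_sphere (0:ℂ) 1).exists_isMaxOn
      (NormedSpace.sphere_nonempty.2 zero_le_one)
      ((hKd.continuousOn.mono (fun z hz => hU₀c (sphere_subset_closedBall hz))).norm)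
    have hx₀max : ∀ y ∈ sphere (0:ℂ) 1, ‖K y‖ ≤ ‖K x₀‖ := fun y hy => hx₀max' hy
    have hM1 : ‖K x₀‖ < 1 := hsphere x₀ hx₀s
    have hKcb : ∀ z ∈ Metric.closedBall (0:ℂ) 1, ‖K z‖ < 1 := by
      intro z hz
      have hbd : ‖K z‖ ≤ ‖K x₀‖ := by
        refine Complex.norm_le_of_forall_mem_frontier_norm_le
          (isBounded_ball (x := (0:ℂ)) (r := 1)) ⟨hKd.mono ?_, ?_⟩ ?_ ?_
        · exact (ball_subset_closedBall).trans hU₀c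
        · exact hKd.continuousOn.mono (by rw [closure_ball (0:ℂ) one_ne_zero]; exact hU₀c)
        · intro y hy
          rw [frontier_ball (0:ℂ) one_ne_zero] at hy
          exact hx₀max y hy
        · rw [closure_ball (0:ℂ) one_ne_zero]; exact hz
      exact lt_of_le_of_lt hbd hM1
    set U' := U₀ ∩ {z | ‖K z‖ < 1} with hU'def
    have hU'o : IsOpen U' := by
      have : U' = U₀ ∩ (fun z => ‖K z‖) ⁻¹' (Iio 1) := rfl
      rw [this]
      exact hKd.continuousOn.norm.isOpen_inter_preimage hU₀o isOpen_Iio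
    have hU'c : Metric.closedBall (0:ℂ) 1 ⊆ U' :=
      subset_inter hU₀c (fun z hz => hKcb z hz)
    obtain ⟨ζ'', β, hζ'', hβ, hfac⟩ := factF hwD hζ hα
    have hζ''0 : ζ'' ≠ 0 := by intro h; rw [h] at hζ''; simp at hζ''
    have h0 : ζ'' * ∏ j, mobius (β j) lb = 0 := by
      rw [← hfac lb (hmem 0)]
      rw [← hGB 0, ← hlbdef, ← hwdef]
      exact mobius_self w
    have hprod0 : ∏ j, mobius (β j) lb = 0 := by
      rcases mul_eq_zero.1 h0 with h | h
      · exact absurd h hζ''0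
      · exact h
    obtain ⟨j₀, _, hj₀⟩ := Finset.prod_eq_zero_iff.1 hprod0
    have hβj₀ : β j₀ = lb := (mobius_eq_zero (hβ j₀) hlbD.le hj₀).symm
    set lam' : Fin (k+1) → ℂ := fun i => lam i.succ with hlam'def
    have hstep : ∀ i : Fin (k+1),
        K (lam' i) = ζ'' * ∏ i' : Fin k, mobius (β (j₀.succAbove i')) (lam' i) := by
      intro i
      have hz : lam' i ∈ unitDisc := hmem i.succ
      have hz1 : ‖lam' i‖ < 1 := mem_ball_zero_iff.1 hz
      have hzU₀ : lam' i ∈ U₀ :=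
        ⟨hUc (ball_subset_closedBall hz), mem_ball_zero_iff.2 (lt_trans hz1 hR1)⟩
      have h1 : mobius lb (lam' i) * K (lam' i) = G' (lam' i) := hrel _ hzU₀
      have h4 : mobius w (ζ * ∏ j, mobius (α j) (lam' i)) =
          ζ'' * ∏ j, mobius (β j) (lam' i) := hfac _ hz
      rw [Fin.prod_univ_succAbove (fun j => mobius (β j) (lam' i)) j₀, hβj₀] at h4
      have h5 : G' (lam' i) = ζ'' * (mobius lb (lam' i) *
          ∏ i' : Fin k, mobius (β (j₀.succAbove i')) (lam' i)) := by
        have h6 : G' (lam' i) = mobius w (ζ * ∏ j, mobius (α j) (lam' i)) := by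
          show mobius w (G (lam' i)) = _
          rw [hGB i.succ]
        rw [h6, h4]
      have hne : mobius lb (lam' i) ≠ 0 := by
        refine mobius_ne_zero hlbD hz1.le ?_
        rw [hlbdef]
        exact fun hc => (Fin.succ_ne_zero i) (hinj hc)
      apply mul_left_cancel₀ hne
      rw [h1, h5]
      ring
    exact IH ζ'' (fun i' => β (j₀.succAbove i')) hζ'' (fun i' => hβ _) U' K hU'o hU'c
      (hKd.mono inter_subset_left) (fun z hz => hz.2) lam'
      (fun i j hij => Fin.succ_injective _ (hinj hij))
      (fun i => hmem i.succ) hstep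

lemma lemS : ∀ (m : ℕ), 1 ≤ m → ∀ (φ : ℂ → ℂ), DifferentiableOn ℂ φ unitDisc →
    (∀ z ∈ unitDisc, ‖φ z‖ < 1) → ∀ (lam : Fin m → ℂ), Function.Injective lam →
    (∀ i, lam i ∈ unitDisc) →
    (∃ (U : Set ℂ) (g : ℂ → ℂ), IsOpen U ∧ Metric.closedBall (0:ℂ) 1 ⊆ U ∧
      DifferentiableOn ℂ g U ∧ (∀ z ∈ U, ‖g z‖ < 1) ∧ ∀ i, g (lam i) = φ (lam i)) ∨
    (∃ k, 1 ≤ k ∧ k ≤ m - 1 ∧ IsBlaschkeOn φ k) := by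
  intro m
  induction m with
  | zero => omega
  | succ m IH =>
    intro _ φ hφd hφb lam hinj hmem
    rcases Nat.eq_zero_or_pos m with rfl | hm
    · left
      refine ⟨ball 0 2, fun _ => φ (lam 0), isOpen_ball, closedBall_subset_ball one_lt_two,
        differentiableOn_const _, fun z _ => hφb _ (hmem 0), fun i => ?_⟩
      rw [Fin.eq_zero i]
    · set lb := lam 0 with hlbdef
      have hlbD : ‖lb‖ < 1 := mem_ball_zero_iff.1 (hmem 0)
      set w := φ lb with hwdef
      have hwD : ‖w‖ < 1 := hφb _ (hmem 0)
      have hwD' : ‖-w‖ < 1 := by rwa [norm_neg]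
      set φ' : ℂ → ℂ := fun z => mobius w (φ z) with hφ'def
      have hφ'd : DifferentiableOn ℂ φ' unitDisc :=
        diffOn_mobius_comp hφd (fun z hz => mobius_denom_ne hwD (hφb z hz).le)
      have hφ'b : ∀ z ∈ unitDisc, ‖φ' z‖ < 1 :=
        fun z hz => norm_mobius_lt_one hwD (hφb z hz)
      have hφ'0 : φ' lb = 0 := by
        show mobius w (φ lb) = 0
        rw [← hwdef]; exact mobius_self w
      set H : ℂ → ℂ := fun z => φ' z * (1 - (starRingEnd ℂ) lb * z) with hHdef
      have hHd : DifferentiableOn ℂ H unitDisc :=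
        hφ'd.mul ((differentiableOn_const _).sub ((differentiableOn_const _).mul
          differentiableOn_id))
      have hH0 : H lb = 0 := by show φ' lb * _ = 0; rw [hφ'0, zero_mul]
      have hop : IsOpen unitDisc := isOpen_ball
      obtain ⟨K, hKd, hKfac⟩ := qcore hop (hmem 0) hHd hH0
      have hrel : ∀ z ∈ unitDisc, mobius lb z * K z = φ' z := by
        intro z hz
        have hz1 : ‖z‖ < 1 := mem_ball_zero_iff.1 hz
        have hdz : 1 - (starRingEnd ℂ) lb * z ≠ 0 := mobius_denom_ne hlbD hz1.le
        have hfz := hKfac z hz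
        simp only [hHdef] at hfz
        rw [mobius, div_mul_eq_mul_div, div_eq_iff hdz]
        linear_combination -hfz
      -- Schwarz–Pick
      have hSP : ∀ z ∈ unitDisc, ‖φ' z‖ ≤ ‖mobius lb z‖ := by
        set ψ : ℂ → ℂ := fun u => φ' (mobius (-lb) u) with hψdef
        have hlbD' : ‖-lb‖ < 1 := by rwa [norm_neg]
        have hmdiff : DifferentiableOn ℂ (fun u => mobius (-lb) u) (ball (0:ℂ) 1) :=
          diffOn_mobius_comp differentiableOn_id
            (fun z hz => mobius_denom_ne hlbD' (le_of_lt (mem_ball_zero_iff.1 hz)))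
        have hmmaps : MapsTo (fun u => mobius (-lb) u) (ball (0:ℂ) 1) (ball (0:ℂ) 1) :=
          fun u hu => mem_ball_zero_iff.2 (norm_mobius_lt_one hlbD' (mem_ball_zero_iff.1 hu))
        have hψd : DifferentiableOn ℂ ψ (ball (0:ℂ) 1) :=
          (hφ'd.comp hmdiff hmmaps : _)
        have hψmaps : MapsTo ψ (ball (0:ℂ) 1) (ball (0:ℂ) 1) := by
          intro u hu
          exact mem_ball_zero_iff.2 (hφ'b _ (hmmaps hu))
        have hψ0 : ψ 0 = 0 := by
          show φ' (mobius (-lb) 0) = 0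
          have : mobius (-lb) 0 = lb := by simp [mobius]
          rw [this, hφ'0]
        intro z hz
        have hz1 : ‖z‖ < 1 := mem_ball_zero_iff.1 hz
        have hu : ‖mobius lb z‖ < 1 := by
          exact norm_mobius_lt_one hlbD hz1
        have h2 := Complex.norm_le_norm_of_mapsTo_ball hψd (hψmaps.mono_right ball_subset_closedBall) hψ0 hu
        have h1 : ψ (mobius lb z) = φ' z := by
          show φ' (mobius (-lb) (mobius lb z)) = φ' z
          rw [mobius_inv hlbD hz1]
        rw [h1] at h2
        exact h2
      have hKne : ∀ z ∈ unitDisc, z ≠ lb → ‖K z‖ ≤ 1 := by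
        intro z hz hne
        have hz1 : ‖z‖ < 1 := mem_ball_zero_iff.1 hz
        have hm0 : mobius lb z ≠ 0 := mobius_ne_zero hlbD hz1.le hne
        have hmpos : 0 < ‖mobius lb z‖ := norm_pos_iff.2 hm0
        have h1 := congrArg norm (hrel z hz)
        rw [norm_mul] at h1
        have h2 := hSP z hz
        rw [← h1] at h2
        exact le_of_mul_le_mul_left (by linarith [h2]) hmpos
      have hKle : ∀ z ∈ unitDisc, ‖K z‖ ≤ 1 := by
        intro z hz
        rcases eq_or_ne z lb with heq | hne
        · have hcont : ContinuousAt K z :=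
            (hKd.differentiableAt (hop.mem_nhds hz)).continuousAt
          have htend : Tendsto (fun y => ‖K y‖) (𝓝[≠] z) (𝓝 ‖K z‖) :=
            (hcont.norm.tendsto).mono_left nhdsWithin_le_nhds
          refine le_of_tendsto htend ?_
          filter_upwards [self_mem_nhdsWithin,
            mem_nhdsWithin_of_mem_nhds (hop.mem_nhds hz)] with y hy1 hy2
          exact hKne y hy2 (heq ▸ hy1)
        · exact hKne z hz hne
      by_cases hdich : ∀ z ∈ unitDisc, ‖K z‖ < 1
      · rcases IH hm K hKd hdich (fun i => lam i.succ)
          (fun i j hij => Fin.succ_injective _ (hinj hij)) (fun i => hmem i.succ) with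
          ⟨U, g', hUo, hUc, hg'd, hg'b, hg'i⟩ | ⟨k', hk'1, hk'le, hBl⟩
        · left
          set R := 2 / (1 + ‖lb‖) with hRdef
          have ht0 : (0:ℝ) ≤ ‖lb‖ := norm_nonneg _
          have hR1 : 1 < R := by
            rw [hRdef, lt_div_iff₀ (by linarith)]
            linarith
          have hRl : ∀ z : ℂ, ‖z‖ < R → ‖(starRingEnd ℂ) lb * z‖ < 1 := by
            intro z hz
            rw [norm_mul, RCLike.norm_conj]
            rcases eq_or_lt_of_le ht0 with h0 | h0
            · rw [← h0]; simpa using one_pos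
            · have h1 : ‖lb‖ * ‖z‖ < ‖lb‖ * R := mul_lt_mul_of_pos_left hz h0
              have h2 : ‖lb‖ * R < 1 := by
                rw [hRdef]
                calc ‖lb‖ * (2 / (1 + ‖lb‖)) = (2*‖lb‖) / (1 + ‖lb‖) := by ring
                  _ < 1 := (div_lt_one (by linarith)).2 (by linarith)
              linarith
          set U₁ := U ∩ ball (0:ℂ) R with hU₁def
          have hU₁o : IsOpen U₁ := hUo.inter isOpen_ball
          have hU₁c : Metric.closedBall (0:ℂ) 1 ⊆ U₁ :=
            subset_inter hUc (closedBall_subset_ball hR1)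
          set u : ℂ → ℂ := fun z => mobius lb z * g' z with hudef
          have hmobd : DifferentiableOn ℂ (fun z => mobius lb z) (ball (0:ℂ) R) := by
            have := diffOn_mobius_comp (differentiableOn_id (s := ball (0:ℂ) R)) (a := lb)
              (fun z hz => one_sub_ne (hRl z (mem_ball_zero_iff.1 hz)))
            exact this
          have hud : DifferentiableOn ℂ u U₁ :=
            (hmobd.mono inter_subset_right).mul (hg'd.mono inter_subset_left)
          set U₂ := U₁ ∩ {z | ‖u z‖ < 1} with hU₂def
          have hU₂o : IsOpen U₂ := by
            have : U₂ = U₁ ∩ (fun z => ‖u z‖) ⁻¹' (Iio 1) := rfl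
            rw [this]
            exact hud.continuousOn.norm.isOpen_inter_preimage hU₁o isOpen_Iio
          have hU₂c : Metric.closedBall (0:ℂ) 1 ⊆ U₂ := by
            refine subset_inter hU₁c ?_
            intro z hz
            have hz1 : ‖z‖ ≤ 1 := mem_closedBall_zero_iff.1 hz
            have h1 : ‖mobius lb z‖ ≤ 1 := norm_mobius_le_one hlbD hz1
            have h2 : ‖g' z‖ < 1 := hg'b z (hUc hz)
            show ‖mobius lb z * g' z‖ < 1
            rw [norm_mul]
            calc ‖mobius lb z‖ * ‖g' z‖ ≤ 1 * ‖g' z‖ :=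
              mul_le_mul_of_nonneg_right h1 (norm_nonneg _)
              _ = ‖g' z‖ := one_mul _
              _ < 1 := h2
          refine ⟨U₂, fun z => mobius (-w) (u z), hU₂o, hU₂c, ?_, ?_, ?_⟩
          · exact diffOn_mobius_comp (hud.mono inter_subset_left)
              (fun z hz => mobius_denom_ne hwD' (le_of_lt hz.2))
          · exact fun z hz => norm_mobius_lt_one hwD' hz.2
          · intro i
            refine Fin.cases ?_ ?_ i
            · have hu0 : u (lam 0) = 0 := by
                show mobius lb (lam 0) * g' (lam 0) = 0
                rw [← hlbdef, mobius_self, zero_mul]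
              show mobius (-w) (u (lam 0)) = φ (lam 0)
              rw [hu0]
              have h7 : mobius (-w) 0 = w := by simp [mobius]
              rw [h7]
            · intro i'
              have hzD : lam i'.succ ∈ unitDisc := hmem i'.succ
              have hz1 : ‖lam i'.succ‖ < 1 := mem_ball_zero_iff.1 hzD
              have hgK : g' (lam i'.succ) = K (lam i'.succ) := hg'i i'
              have huv : u (lam i'.succ) = φ' (lam i'.succ) := by
                show mobius lb (lam i'.succ) * g' (lam i'.succ) = _
                rw [hgK]
                exact hrel _ hzD
              show mobius (-w) (u (lam i'.succ)) = φ (lam i'.succ)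
              rw [huv]
              exact mobius_inv hwD (hφb _ hzD)
        · right
          obtain ⟨ζt, αt, hζt, hαt, hBeq⟩ := hBl
          have hconsnorm : ∀ j : Fin (k'+1), ‖Fin.cons (α := fun _ => ℂ) lb αt j‖ < 1 := by
            intro j
            refine Fin.cases ?_ ?_ j
            · simpa using hlbD
            · intro j'; simpa using hαt j'
          have hcomp : ∀ z ∈ unitDisc, mobius w (φ z) =
              ζt * ∏ j : Fin (k'+1), mobius (Fin.cons (α := fun _ => ℂ) lb αt j) z := by
            intro z hz
            rw [Fin.prod_univ_succ]
            simp only [Fin.cons_zero, Fin.cons_succ]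
            calc mobius w (φ z) = mobius lb z * K z := (hrel z hz).symm
              _ = mobius lb z * (ζt * ∏ j, mobius (αt j) z) := by rw [hBeq z hz]
              _ = ζt * (mobius lb z * ∏ j, mobius (αt j) z) := by ring
          obtain ⟨ζ', β, hζ', hβ', hfac⟩ := factF hwD' hζt hconsnorm
          refine ⟨k'+1, by omega, by omega, ζ', β, hζ', hβ', ?_⟩
          intro z hz
          have h1 : φ z = mobius (-w) (mobius w (φ z)) := (mobius_inv hwD (hφb z hz)).symm
          rw [h1, hcomp z hz]
          exact hfac z hz
      · push_neg at hdich
        obtain ⟨z₀, hz₀D, hz₀ge⟩ := hdich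
        have hz₀eq : ‖K z₀‖ = 1 := le_antisymm (hKle z₀ hz₀D) hz₀ge
        have hmax : IsMaxOn (norm ∘ K) unitDisc z₀ := by
          intro z hz
          show ‖K z‖ ≤ ‖K z₀‖
          rw [hz₀eq]
          exact hKle z hz
        have hconst := Complex.eqOn_of_isPreconnected_of_isMaxOn_norm
          (convex_ball (0:ℂ) 1).isPreconnected isOpen_ball hKd hz₀D hmax
        set c := K z₀ with hcdef
        right
        have hcomp : ∀ z ∈ unitDisc, mobius w (φ z) =
            c * ∏ _j : Fin 1, mobius lb z := by
          intro z hz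
          rw [Fin.prod_univ_one]
          have h2 : K z = c := hconst hz
          calc mobius w (φ z) = mobius lb z * K z := (hrel z hz).symm
            _ = c * mobius lb z := by rw [h2]; ring
        obtain ⟨ζ', β, hζ', hβ', hfac⟩ := factF (k := 1) hwD' hz₀eq (fun _ => hlbD)
        refine ⟨1, le_refl 1, by omega, ζ', β, hζ', hβ', ?_⟩
        intro z hz
        have h1 : φ z = mobius (-w) (mobius w (φ z)) := (mobius_inv hwD (hφb z hz)).symm
        rw [h1, hcomp z hz]
        exact hfac z hz

variable {E : Type*} [NormedAddCommGroup E] [NormedSpace ℂ E]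

/-- `f` is a weak `m`-extremal for the nodes `lam` with respect to the domain `D`:
there is no map `h`, holomorphic on an open neighborhood of the closed unit disc
with values in `D`, interpolating `f` at all the nodes. -/
def WeakExtremalFor (D : Set E) (f : ℂ → E) {m : ℕ} (lam : Fin m → ℂ) : Prop :=
  ¬ ∃ (U : Set ℂ) (h : ℂ → E), IsOpen U ∧ Metric.closedBall (0 : ℂ) 1 ⊆ U ∧
      DifferentiableOn ℂ h U ∧ Set.MapsTo h U D ∧ ∀ j, h (lam j) = f (lam j)

/-- `f` is a weak `m`-extremal of `D`: it is a weak `m`-extremal for some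
pairwise distinct nodes in the unit disc. -/
def IsWeakExtremal (D : Set E) (f : ℂ → E) (m : ℕ) : Prop :=
  ∃ lam : Fin m → ℂ, Function.Injective lam ∧ (∀ j, lam j ∈ unitDisc) ∧
    WeakExtremalFor D f lam

/-- `f` is an `m`-extremal of `D`: it is a weak `m`-extremal for every choice of
pairwise distinct nodes in the unit disc. -/
def IsExtremal (D : Set E) (f : ℂ → E) (m : ℕ) : Prop :=
  ∀ lam : Fin m → ℂ, Function.Injective lam → (∀ j, lam j ∈ unitDisc) →
    WeakExtremalFor D f lam

/-- `f` is an `m`-geodesic of `D`: there is a holomorphic `F : D → 𝔻` such that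
`F ∘ f` is a non-constant Blaschke product of degree at most `m - 1`. -/
def IsGeodesic (D : Set E) (f : ℂ → E) (m : ℕ) : Prop :=
  ∃ F : E → ℂ, DifferentiableOn ℂ F D ∧ Set.MapsTo F D unitDisc ∧
    ∃ k : ℕ, 1 ≤ k ∧ k ≤ m - 1 ∧ IsBlaschkeOn (fun z => F (f z)) k

/-- A domain `D ⊆ ℂⁿ` is `k`-balanced (quasi-balanced) if
`(λ^{k₁} z₁, …, λ^{k_n} z_n) ∈ D` for all `λ` in the closed unit disc, `z ∈ D`. -/
def QuasiBalanced {n : ℕ} (k : Fin n → ℕ) (D : Set (Fin n → ℂ)) : Prop :=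
  ∀ l : ℂ, ‖l‖ ≤ 1 → ∀ z ∈ D, (fun j => l ^ k j * z j) ∈ D

/-- The complex ellipsoid `E(p) = {z ∈ ℂⁿ : Σ_j |z_j|^{2 p_j} < 1}`. -/
def ellipsoid {n : ℕ} (p : Fin n → ℝ) : Set (Fin n → ℂ) :=
  {z | ∑ j, ‖z j‖ ^ (2 * p j) < 1}

/-- The Euclidean unit ball `𝔹_n ⊆ ℂⁿ`. -/
def euclideanBall (n : ℕ) : Set (Fin n → ℂ) :=
  {z | ∑ j, ‖z j‖ ^ 2 < 1}

/-- For a holomorphic map `f : 𝔻 → 𝔻ⁿ` into the polydisc the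
following are equivalent: `f` is a weak `m`-extremal; `f` is an `m`-extremal;
`f` is an `m`-geodesic; some coordinate `f_j` is a non-constant Blaschke product
of degree at most `m-1`. -/
theorem polydisc_weak_extremal_tfae
    {n : ℕ} (P : Set (Fin n → ℂ)) (hP : P = {z | ∀ j, ‖z j‖ < 1})
    (m : ℕ) (hm : 2 ≤ m)
    (f : ℂ → Fin n → ℂ) (hf : DifferentiableOn ℂ f unitDisc)
    (hfD : Set.MapsTo f unitDisc P) :
    (IsWeakExtremal P f m ↔ IsExtremal P f m) ∧
    (IsWeakExtremal P f m ↔ IsGeodesic P f m) ∧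
    (IsWeakExtremal P f m ↔
      ∃ (j : Fin n) (k : ℕ), 1 ≤ k ∧ k ≤ m - 1 ∧ IsBlaschkeOn (fun z => f z j) k) := by
  subst hP
  have hDC : (∃ (j : Fin n) (k : ℕ), 1 ≤ k ∧ k ≤ m - 1 ∧ IsBlaschkeOn (fun z => f z j) k) →
      IsGeodesic {z | ∀ j, ‖z j‖ < 1} f m := by
    rintro ⟨j, k, hk1, hk2, hB⟩
    refine ⟨fun v => v j, ?_, ?_, k, hk1, hk2, hB⟩
    · exact ((ContinuousLinearMap.proj (R := ℂ) (φ := fun _ : Fin n => ℂ)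
        j).differentiable).differentiableOn
    · intro v hv
      exact mem_ball_zero_iff.2 (hv j)
  have hCB : IsGeodesic {z | ∀ j, ‖z j‖ < 1} f m →
      IsExtremal {z | ∀ j, ‖z j‖ < 1} f m := by
    rintro ⟨F, hFd, hFm, k, hk1, hk2, ζ, α, hζ, hα, hBeq⟩
    intro lam hinj hmem
    rintro ⟨U, h, hUo, hUc, hhd, hhm, hhi⟩
    have hk1m : k + 1 ≤ m := by omega
    refine lemA k ζ α hζ hα U (fun z => F (h z)) hUo hUc ?_ ?_
        (fun i => lam (Fin.castLE hk1m i)) ?_ (fun i => hmem _) ?_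
    · exact hFd.comp hhd hhm
    · intro z hz
      exact mem_ball_zero_iff.1 (hFm (hhm hz))
    · intro i1 i2 h12
      exact Fin.castLE_injective hk1m (hinj h12)
    · intro i
      have hmemd := hmem (Fin.castLE hk1m i)
      show F (h (lam (Fin.castLE hk1m i))) = _
      rw [hhi (Fin.castLE hk1m i)]
      exact hBeq (lam (Fin.castLE hk1m i)) hmemd
  have hBA : IsExtremal {z | ∀ j, ‖z j‖ < 1} f m →
      IsWeakExtremal {z | ∀ j, ‖z j‖ < 1} f m := by
    intro hE
    have hm0 : (m:ℂ) ≠ 0 := Nat.cast_ne_zero.2 (by omega)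
    have hmR : (0:ℝ) < m := by positivity
    set lam : Fin m → ℂ := fun i => ((i:ℕ) : ℂ) / (m : ℂ) with hlam
    have hinj : Function.Injective lam := by
      intro i j hij
      have h1 : ((i:ℕ) : ℂ) = ((j:ℕ) : ℂ) := by
        simp only [hlam, div_left_inj' hm0] at hij
        exact_mod_cast hij
      have h2 : (i:ℕ) = (j:ℕ) := Nat.cast_injective h1
      exact Fin.ext h2
    have hmem : ∀ i, lam i ∈ unitDisc := by
      intro i
      refine mem_ball_zero_iff.2 ?_
      rw [hlam]
      simp only [norm_div, Complex.norm_natCast]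
      rw [div_lt_one hmR]
      exact_mod_cast i.isLt
    exact ⟨lam, hinj, hmem, hE lam hinj hmem⟩
  have hAD : IsWeakExtremal {z | ∀ j, ‖z j‖ < 1} f m →
      ∃ (j : Fin n) (k : ℕ), 1 ≤ k ∧ k ≤ m - 1 ∧ IsBlaschkeOn (fun z => f z j) k := by
    rintro ⟨lam, hinj, hmem, hweak⟩
    have hscal : ∃ j : Fin n, ¬∃ (U : Set ℂ) (g : ℂ → ℂ), IsOpen U ∧
        Metric.closedBall (0:ℂ) 1 ⊆ U ∧ DifferentiableOn ℂ g U ∧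
        (∀ z ∈ U, ‖g z‖ < 1) ∧ ∀ i, g (lam i) = f (lam i) j := by
      by_contra hno
      push_neg at hno
      choose U g hUo hUc hgd hgb hgi using hno
      refine hweak ⟨⋂ j, U j, fun z j => g j z, isOpen_iInter_of_finite hUo,
        Set.subset_iInter hUc, ?_, ?_, ?_⟩
      · exact differentiableOn_pi.2 fun j => (hgd j).mono (Set.iInter_subset _ j)
      · intro z hz j
        exact mem_ball_zero_iff.1 (mem_ball_zero_iff.2 (hgb j z (Set.mem_iInter.1 hz j)))
      · intro i
        funext j
        exact hgi j i
    obtain ⟨j, hj⟩ := hscal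
    have hfjd : DifferentiableOn ℂ (fun z => f z j) unitDisc := differentiableOn_pi.1 hf j
    have hfjb : ∀ z ∈ unitDisc, ‖f z j‖ < 1 := fun z hz => hfD hz j
    rcases lemS m (by omega) _ hfjd hfjb lam hinj hmem with
      ⟨U, g, hUo, hUc, hgd, hgb, hgi⟩ | ⟨k, hk1, hk2, hB⟩
    · exact absurd ⟨U, g, hUo, hUc, hgd, hgb, hgi⟩ hj
    · exact ⟨j, k, hk1, hk2, hB⟩
  exact ⟨⟨fun a => hCB (hDC (hAD a)), fun b => hBA b⟩,
    ⟨fun a => hDC (hAD a), fun c => hBA (hCB c)⟩,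
    ⟨hAD, fun d => hBA (hCB (hDC d))⟩⟩
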